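/- For every positive integer n ≥ 3, the number of finite sets E of positive integers with max E = n+1, 2 ∉ E, 3 ∉ E, min E > |E|, and |E| ≠ 2, equals F_n - (n - 2). -/

import Mathlib

open Finset in
private lemma stmt18_fiber_card (n k : ℕ) (hn : 3 ≤ n) (hk0 : k ≠ 0) (hk2 : k ≠ 2) :
    ((((Finset.Icc 4 (n+1)).powerset).filter
        (fun E => n+1 ∈ E ∧ (∀ x ∈ E, E.card < x) ∧ E.card ≠ 2)).filter
        (fun E => E.card = k)).card = Nat.choose (n - k) (k - 1) := by
  have key : ((((Finset.Icc 4 (n+1)).powerset).filter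
        (fun E => n+1 ∈ E ∧ (∀ x ∈ E, E.card < x) ∧ E.card ≠ 2)).filter
        (fun E => E.card = k)).card
      = ((Finset.Icc (max 4 (k+1)) n).powersetCard (k-1)).card := by
    apply card_bij (fun E _ => E.erase (n+1))
    · rintro E hE
      simp only [mem_filter, mem_powerset] at hE
      obtain ⟨⟨hsub, hmem, hlt, -⟩, hcard⟩ := hE
      simp only [mem_powersetCard]
      constructor
      · intro x hx
        have hxE := mem_of_mem_erase hx
        have hxne := ne_of_mem_erase hx
        have h1 := mem_Icc.mp (hsub hxE)
        have h2 := hlt x hxE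
        simp only [mem_Icc, le_max_iff, max_le_iff]
        omega
      · rw [card_erase_of_mem hmem, hcard]
    · rintro E₁ hE₁ E₂ hE₂ he
      simp only [mem_filter, mem_powerset] at hE₁ hE₂
      have h1 : insert (n+1) (E₁.erase (n+1)) = E₁ := insert_erase hE₁.1.2.1
      have h2 : insert (n+1) (E₂.erase (n+1)) = E₂ := insert_erase hE₂.1.2.1
      rw [← h1, ← h2, he]
    · rintro F hF
      simp only [mem_powersetCard] at hF
      obtain ⟨hsub, hcard⟩ := hF
      have hnotmem : n + 1 ∉ F := by
        intro h; have := mem_Icc.mp (hsub h); omega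
      have hkn : k ≤ n := by
        by_cases h1 : k = 1
        · omega
        · have : 2 ≤ k - 1 := by omega
          have hne : F.Nonempty := by
            rw [← card_pos, hcard]; omega
          obtain ⟨x, hx⟩ := hne
          have := mem_Icc.mp (hsub hx)
          simp only [max_le_iff] at this
          omega
      refine ⟨insert (n+1) F, ?_, ?_⟩
      · simp only [mem_filter, mem_powerset]
        have hcardi : (insert (n+1) F).card = k := by
          rw [card_insert_of_notMem hnotmem, hcard]; omega
        refine ⟨⟨?_, mem_insert_self _ _, ?_, by omega⟩, hcardi⟩
        · intro x hx
          rcases mem_insert.mp hx with h | h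
          · simp only [mem_Icc]; omega
          · have := mem_Icc.mp (hsub h)
            simp only [le_max_iff, max_le_iff] at this
            simp only [mem_Icc]; omega
        · intro x hx
          rw [hcardi]
          rcases mem_insert.mp hx with h | h
          · omega
          · have := mem_Icc.mp (hsub h)
            simp only [le_max_iff, max_le_iff] at this
            omega
      · rw [erase_insert hnotmem]
  rw [key, card_powersetCard, Nat.card_Icc]
  by_cases h1 : k = 1
  · subst h1
    simp
  · have : max 4 (k+1) = k + 1 := by omega
    rw [this]
    congr 1
    omega

open Finset in
private lemma stmt18_sum (n : ℕ) (hn : 3 ≤ n) :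
    (∑ k ∈ range (n+2), if k = 0 ∨ k = 2 then 0 else Nat.choose (n-k) (k-1)) + (n-2)
      = Nat.fib n := by
  obtain ⟨m, rfl⟩ : ∃ m, n = m + 3 := ⟨n - 3, by omega⟩
  have hfib : Nat.fib (m+3) = ∑ k ∈ range (m+3), Nat.choose (m+2-k) k := by
    rw [show m+3 = (m+2)+1 from rfl, Nat.fib_succ_eq_sum_choose,
      ← Finset.Nat.sum_antidiagonal_swap,
      Finset.Nat.sum_antidiagonal_eq_sum_range_succ_mk]
    simp
  have hL : (∑ k ∈ range (m+3+2),
      if k = 0 ∨ k = 2 then 0 else Nat.choose (m+3-k) (k-1))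
      = (∑ k ∈ range (m+1), Nat.choose (m-k) (k+2)) + 1 := by
    rw [show m+3+2 = (m+2)+1+1+1 from rfl]
    rw [sum_range_succ', sum_range_succ', sum_range_succ']
    rw [sum_range_succ]
    norm_num
    refine sum_congr rfl fun k _ => ?_
    rw [if_neg (by omega : ¬ k+1+1+1 = 2)]
    congr 1 <;> omega
  have hR : (∑ k ∈ range (m+3), Nat.choose (m+2-k) k)
      = (∑ k ∈ range (m+1), Nat.choose (m-k) (k+2)) + (m+1) + 1 := by
    rw [show m+3 = (m+1)+1+1 from rfl]
    rw [sum_range_succ', sum_range_succ']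
    have e : ∀ k ∈ range (m+1), Nat.choose (m+2-(k+1+1)) (k+1+1)
        = Nat.choose (m-k) (k+2) := fun k _ => by congr 1 <;> omega
    rw [sum_congr rfl e]
    simp [Nat.choose_one_right]
  rw [hfib, hL, hR]
  omega

open Finset in
theorem stmt18 (n : ℕ) (hn : n ≥ 3) :
    {E : Finset ℕ | ∃ h : E.Nonempty, (∀ x ∈ E, 0 < x) ∧
      E.max' h = n + 1 ∧ 2 ∉ E ∧ 3 ∉ E ∧ E.card < E.min' h ∧ E.card ≠ 2}.ncard
      = Nat.fib n - (n - 2) := by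
  have hset : {E : Finset ℕ | ∃ h : E.Nonempty, (∀ x ∈ E, 0 < x) ∧
      E.max' h = n + 1 ∧ 2 ∉ E ∧ 3 ∉ E ∧ E.card < E.min' h ∧ E.card ≠ 2}
      = ↑(((Finset.Icc 4 (n+1)).powerset).filter
        (fun E => n+1 ∈ E ∧ (∀ x ∈ E, E.card < x) ∧ E.card ≠ 2)) := by
    ext E
    simp only [Set.mem_setOf_eq, coe_filter, mem_powerset, Set.mem_setOf_eq]
    constructor
    · rintro ⟨h, hpos, hmax, h2, h3, hmin, hcard⟩
      have hmem : n + 1 ∈ E := hmax ▸ E.max'_mem h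
      have hsub : E ⊆ Finset.Icc 4 (n+1) := by
        intro x hx
        have h1 : x ≤ n + 1 := hmax ▸ E.le_max' x hx
        have h4 : E.card < x := lt_of_lt_of_le hmin (E.min'_le x hx)
        have : 1 ≤ E.card := card_pos.mpr h
        have : x ≠ 2 := fun he => h2 (he ▸ hx)
        have : x ≠ 3 := fun he => h3 (he ▸ hx)
        simp only [mem_Icc]
        omega
      exact ⟨hsub, hmem, fun x hx => lt_of_lt_of_le hmin (E.min'_le x hx), hcard⟩
    · rintro ⟨hsub, hmem, hlt, hcard⟩
      have h : E.Nonempty := ⟨_, hmem⟩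
      refine ⟨h, ?_, ?_, ?_, ?_, ?_, hcard⟩
      · intro x hx; have := mem_Icc.mp (hsub hx); omega
      · refine le_antisymm (max'_le _ _ _ fun x hx => (mem_Icc.mp (hsub hx)).2)
          (le_max' _ _ hmem)
      · intro hx; have := mem_Icc.mp (hsub hx); omega
      · intro hx; have := mem_Icc.mp (hsub hx); omega
      · exact hlt _ (E.min'_mem h)
  rw [hset, Set.ncard_coe_finset]
  set S := ((Finset.Icc 4 (n+1)).powerset).filter
      (fun E => n+1 ∈ E ∧ (∀ x ∈ E, E.card < x) ∧ E.card ≠ 2) with hS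
  have hfiber : S.card = ∑ k ∈ range (n+2), (S.filter (fun E => E.card = k)).card := by
    apply card_eq_sum_card_fiberwise
    intro E hE
    simp only [hS, mem_coe, mem_filter, mem_powerset] at hE
    have := card_le_card hE.1
    rw [Nat.card_Icc] at this
    simp only [coe_range, Set.mem_Iio]
    omega
  have hval : ∀ k ∈ range (n+2), (S.filter (fun E => E.card = k)).card
      = if k = 0 ∨ k = 2 then 0 else Nat.choose (n-k) (k-1) := by
    intro k _
    by_cases hk : k = 0 ∨ k = 2
    · rw [if_pos hk, card_eq_zero, filter_eq_empty_iff]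
      intro E hE
      simp only [hS, mem_filter, mem_powerset] at hE
      obtain ⟨-, hmem, -, hc2⟩ := hE
      have : E.card ≠ 0 := by
        simp only [ne_eq, card_eq_zero]
        rintro rfl
        exact notMem_empty _ hmem
      omega
    · push_neg at hk
      rw [if_neg (by push_neg; exact hk)]
      exact stmt18_fiber_card n k hn hk.1 hk.2
  rw [hfiber, sum_congr rfl hval]
  have := stmt18_sum n hn
  omega
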